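/- Fix positive integers t and m. Every t-uniform hypergraph (set system of t-element sets) with more than t!·(m-1)^t edges contains a sunflower with m petals, i.e., m distinct sets whose pairwise intersections are all equal to a common core. -/

import Mathlib

private lemma sunflower_aux {α : Type} [DecidableEq α] :
    ∀ (t m : ℕ), 0 < m → ∀ (𝒜 : Finset (Finset α)), (∀ A ∈ 𝒜, A.card = t) →
    Nat.factorial t * (m - 1) ^ t < 𝒜.card →
    ∃ 𝒮 ⊆ 𝒜, 𝒮.card = m ∧
      ∃ C : Finset α, ∀ A ∈ 𝒮, ∀ B ∈ 𝒮, A ≠ B → A ∩ B = C := by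
  intro t
  induction t with
  | zero =>
    intro m hm 𝒜 hunif hcard
    simp at hcard
    have h1 : 𝒜 ⊆ {∅} := by
      intro A hA
      simp [Finset.card_eq_zero.mp (hunif A hA)]
    have := Finset.card_le_card h1
    simp at this
    omega
  | succ t IH =>
    intro m hm 𝒜 hunif hcard
    -- handle m = 1
    rcases eq_or_lt_of_le (show 1 ≤ m from hm) with hm1 | hm2
    · have hne : 𝒜.Nonempty := Finset.card_pos.mp (by omega)
      obtain ⟨A, hA⟩ := hne
      refine ⟨{A}, by simpa using hA, by simp [← hm1], ∅, ?_⟩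
      intro A1 h1 A2 h2 hne'
      simp at h1 h2
      exact absurd (h1.trans h2.symm) hne'
    -- maximal pairwise disjoint subfamily
    obtain ⟨𝒟, h𝒟mem, h𝒟max⟩ := Finset.exists_max_image
      (𝒜.powerset.filter (fun 𝒟 => ∀ A ∈ 𝒟, ∀ B ∈ 𝒟, A ≠ B → A ∩ B = ∅))
      Finset.card (by exact ⟨∅, by simp⟩)
    rw [Finset.mem_filter, Finset.mem_powerset] at h𝒟mem
    obtain ⟨h𝒟sub, h𝒟dis⟩ := h𝒟mem
    by_cases hbig : m ≤ 𝒟.card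
    · -- m pairwise disjoint sets
      obtain ⟨𝒮, h𝒮sub, h𝒮card⟩ := Finset.exists_subset_card_eq hbig
      exact ⟨𝒮, h𝒮sub.trans h𝒟sub, h𝒮card, ∅,
        fun A hA B hB hne => h𝒟dis A (h𝒮sub hA) B (h𝒮sub hB) hne⟩
    · push_neg at hbig
      set Y := 𝒟.biUnion id with hY
      -- every A in 𝒜 meets Y
      have hmeet : ∀ A ∈ 𝒜, (A ∩ Y).Nonempty := by
        intro A hA
        by_contra h
        rw [Finset.not_nonempty_iff_eq_empty] at h
        have hAne : A.Nonempty := Finset.card_pos.mp (by rw [hunif A hA]; omega)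
        have hAnotin : A ∉ 𝒟 := by
          intro hin
          have : A ⊆ Y := Finset.subset_biUnion_of_mem id hin
          rw [Finset.inter_eq_left.mpr this] at h
          exact hAne.ne_empty h
        have hins : insert A 𝒟 ∈ 𝒜.powerset.filter
            (fun 𝒟 => ∀ A ∈ 𝒟, ∀ B ∈ 𝒟, A ≠ B → A ∩ B = ∅) := by
          rw [Finset.mem_filter, Finset.mem_powerset]
          constructor
          · exact Finset.insert_subset hA h𝒟sub
          · intro A1 h1 A2 h2 hne
            rcases Finset.mem_insert.mp h1 with he1 | hd1
            · rcases Finset.mem_insert.mp h2 with he2 | hd2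
              · exact absurd (he1.trans he2.symm) hne
              · subst he1
                have hsubY : A2 ⊆ Y := Finset.subset_biUnion_of_mem id hd2
                rw [← Finset.subset_empty, ← h]
                exact Finset.inter_subset_inter_left hsubY
            · rcases Finset.mem_insert.mp h2 with he2 | hd2
              · subst he2
                have hsubY : A1 ⊆ Y := Finset.subset_biUnion_of_mem id hd1
                rw [Finset.inter_comm, ← Finset.subset_empty, ← h]
                exact Finset.inter_subset_inter_left hsubY
              · exact h𝒟dis A1 hd1 A2 hd2 hne
        have := h𝒟max _ hins
        rw [Finset.card_insert_of_notMem hAnotin] at this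
        omega
      -- pigeonhole: some x in many sets
      have hYcard : Y.card ≤ (m - 1) * (t + 1) := by
        calc Y.card ≤ ∑ D ∈ 𝒟, (id D).card := Finset.card_biUnion_le
        _ = ∑ D ∈ 𝒟, (t + 1) := by
            apply Finset.sum_congr rfl; intro D hD; exact hunif D (h𝒟sub hD)
        _ = 𝒟.card * (t + 1) := by rw [Finset.sum_const, smul_eq_mul]
        _ ≤ (m - 1) * (t + 1) := by
            apply Nat.mul_le_mul_right; omega
      have hx : ∃ x ∈ Y, Nat.factorial t * (m - 1) ^ t <
          (𝒜.filter (fun A => x ∈ A)).card := by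
        by_contra h
        push_neg at h
        have hsub : 𝒜 ⊆ Y.biUnion (fun x => 𝒜.filter (fun A => x ∈ A)) := by
          intro A hA
          obtain ⟨x, hx⟩ := hmeet A hA
          rw [Finset.mem_inter] at hx
          exact Finset.mem_biUnion.mpr ⟨x, hx.2, Finset.mem_filter.mpr ⟨hA, hx.1⟩⟩
        have h1 : 𝒜.card ≤ Y.card * (Nat.factorial t * (m - 1) ^ t) := by
          calc 𝒜.card ≤ (Y.biUnion (fun x => 𝒜.filter (fun A => x ∈ A))).card :=
              Finset.card_le_card hsub
          _ ≤ ∑ x ∈ Y, (𝒜.filter (fun A => x ∈ A)).card := Finset.card_biUnion_le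
          _ ≤ ∑ x ∈ Y, (Nat.factorial t * (m - 1) ^ t) :=
              Finset.sum_le_sum fun x hx => h x hx
          _ = Y.card * (Nat.factorial t * (m - 1) ^ t) := by
              rw [Finset.sum_const, smul_eq_mul]
        have h2 : Y.card * (Nat.factorial t * (m - 1) ^ t) ≤
            Nat.factorial (t + 1) * (m - 1) ^ (t + 1) := by
          calc Y.card * (Nat.factorial t * (m - 1) ^ t)
              ≤ ((m - 1) * (t + 1)) * (Nat.factorial t * (m - 1) ^ t) :=
                Nat.mul_le_mul_right _ hYcard
          _ = Nat.factorial (t + 1) * (m - 1) ^ (t + 1) := by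
              rw [Nat.factorial_succ, pow_succ]; ring
        omega
      obtain ⟨x, hxY, hxcard⟩ := hx
      -- build the derived family
      set ℬ := (𝒜.filter (fun A => x ∈ A)).image (fun A => A.erase x) with hℬ
      have hinj : Set.InjOn (fun A : Finset α => A.erase x) ↑(𝒜.filter (fun A => x ∈ A)) := by
        intro A1 h1 A2 h2 h
        rw [Finset.coe_filter, Set.mem_setOf_eq] at h1 h2
        rw [← Finset.insert_erase h1.2, ← Finset.insert_erase h2.2]
        simp only at h
        rw [h]
      have hℬcard : Nat.factorial t * (m - 1) ^ t < ℬ.card := by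
        rw [hℬ, Finset.card_image_of_injOn hinj]; exact hxcard
      have hℬunif : ∀ B ∈ ℬ, B.card = t := by
        intro B hB
        rw [hℬ, Finset.mem_image] at hB
        obtain ⟨A, hA, rfl⟩ := hB
        rw [Finset.mem_filter] at hA
        rw [Finset.card_erase_of_mem hA.2, hunif A hA.1]
        omega
      obtain ⟨𝒮', h𝒮'sub, h𝒮'card, C, hC⟩ := IH m hm ℬ hℬunif hℬcard
      -- lift back
      have hxnot : ∀ B ∈ 𝒮', x ∉ B := by
        intro B hB
        have := h𝒮'sub hB
        rw [hℬ, Finset.mem_image] at this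
        obtain ⟨A, _, rfl⟩ := this
        exact Finset.notMem_erase x A
      refine ⟨𝒮'.image (insert x), ?_, ?_, insert x C, ?_⟩
      · intro S hS
        rw [Finset.mem_image] at hS
        obtain ⟨B, hB, rfl⟩ := hS
        have := h𝒮'sub hB
        rw [hℬ, Finset.mem_image] at this
        obtain ⟨A, hA, rfl⟩ := this
        rw [Finset.mem_filter] at hA
        rw [Finset.insert_erase hA.2]
        exact hA.1
      · rw [Finset.card_image_of_injOn, h𝒮'card]
        intro B1 h1 B2 h2 h
        have : (insert x B1).erase x = (insert x B2).erase x := by rw [h]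
        rwa [Finset.erase_insert (hxnot B1 h1), Finset.erase_insert (hxnot B2 h2)] at this
      · intro A1 hA1 A2 hA2 hne
        rw [Finset.mem_image] at hA1 hA2
        obtain ⟨B1, hB1, rfl⟩ := hA1
        obtain ⟨B2, hB2, rfl⟩ := hA2
        have hBne : B1 ≠ B2 := by rintro rfl; exact hne rfl
        have := hC B1 hB1 B2 hB2 hBne
        ext a
        simp only [Finset.mem_inter, Finset.mem_insert]
        constructor
        · rintro ⟨h1 | h1, h2 | h2⟩
          · exact Or.inl h1
          · exact Or.inl h1
          · exact Or.inl h2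
          · right; rw [← this, Finset.mem_inter]; exact ⟨h1, h2⟩
        · rintro (rfl | h)
          · exact ⟨Or.inl rfl, Or.inl rfl⟩
          · rw [← this, Finset.mem_inter] at h
            exact ⟨Or.inr h.1, Or.inr h.2⟩

/-- Erdős–Rado sunflower lemma: every `t`-uniform family of more than `t!·(m-1)^t` sets
contains a sunflower with `m` petals. -/
theorem stmt3 {α : Type} [DecidableEq α] (t m : ℕ) (ht : 0 < t) (hm : 0 < m)
    (𝒜 : Finset (Finset α)) (hunif : ∀ A ∈ 𝒜, A.card = t)
    (hcard : Nat.factorial t * (m - 1) ^ t < 𝒜.card) :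
    ∃ 𝒮 ⊆ 𝒜, 𝒮.card = m ∧
      ∃ C : Finset α, ∀ A ∈ 𝒮, ∀ B ∈ 𝒮, A ≠ B → A ∩ B = C := by
  exact sunflower_aux t m hm 𝒜 hunif hcard
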